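/- In the topology 𝒯_c on the closed unit ball D̄ (the projective/Klein model of the hyperbolic space and its boundary), the collection of open half-spaces forms a base: any finite intersection of open half-spaces with nonempty intersection with D̄ contains an open half-space meeting D̄. -/

import Mathlib

/-- In the closed unit ball `D̄` of an infinite-dimensional separable Hilbert space,
the open half-spaces `{x ∈ D̄ : ⟨x,u⟩ > c}` form a base of the weak topology: any
nonempty finite intersection of open half-spaces contains a nonempty open half-space. -/
theorem open_halfspaces_form_base
    {E : Type*} [NormedAddCommGroup E] [InnerProductSpace ℝ E] [CompleteSpace E]
    [TopologicalSpace.SeparableSpace E] (hinf : ¬ FiniteDimensional ℝ E)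
    {n : ℕ} (u : Fin n → E) (c : Fin n → ℝ)
    (hne : (⋂ i, {x : E | ‖x‖ ≤ 1 ∧ c i < (inner ℝ x (u i) : ℝ)}).Nonempty) :
    ∃ (v : E) (b : ℝ),
      {x : E | ‖x‖ ≤ 1 ∧ b < (inner ℝ x v : ℝ)}.Nonempty ∧
      {x : E | ‖x‖ ≤ 1 ∧ b < (inner ℝ x v : ℝ)} ⊆
        ⋂ i, {x : E | ‖x‖ ≤ 1 ∧ c i < (inner ℝ x (u i) : ℝ)} := by
  -- get a point in the closed ball satisfying all the strict inequalities
  obtain ⟨x₀, hx₀le, hx₀i⟩ : ∃ x : E, ‖x‖ ≤ 1 ∧ ∀ i, c i < (inner ℝ x (u i) : ℝ) := by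
    obtain ⟨x, hx⟩ := hne
    simp only [Set.mem_iInter, Set.mem_setOf_eq] at hx
    rcases Nat.eq_zero_or_pos n with h0 | hpos
    · subst h0; exact ⟨0, by simp, fun i => i.elim0⟩
    · exact ⟨x, (hx ⟨0, hpos⟩).1, fun i => (hx i).2⟩
  -- find a unit vector orthogonal to x₀ and all the u i
  set K : Submodule ℝ E := Submodule.span ℝ (insert x₀ (Set.range u)) with hKdef
  have hK : FiniteDimensional ℝ K :=
    FiniteDimensional.span_of_finite ℝ ((Set.finite_range u).insert x₀)
  have hKbot : Kᗮ ≠ ⊥ := by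
    intro h
    have hKtop : K = ⊤ := Submodule.orthogonal_eq_bot_iff.mp h
    have : FiniteDimensional ℝ (⊤ : Submodule ℝ E) := hKtop ▸ hK
    exact hinf (Submodule.topEquiv.finiteDimensional)
  obtain ⟨w', hw'mem, hw'ne⟩ := Submodule.exists_mem_ne_zero_of_ne_bot hKbot
  set w : E := ‖w'‖⁻¹ • w' with hwdef
  have hwnorm : ‖w‖ = 1 := by
    rw [hwdef, norm_smul, norm_inv, norm_norm]
    field_simp [norm_ne_zero_iff.mpr hw'ne]
  have hworth : ∀ v ∈ K, (inner ℝ v w : ℝ) = 0 := by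
    intro v hv
    have h0 : (inner ℝ v w' : ℝ) = 0 := (Submodule.mem_orthogonal K w').mp hw'mem v hv
    rw [hwdef, real_inner_smul_right, h0, mul_zero]
  have hx₀w : (inner ℝ x₀ w : ℝ) = 0 :=
    hworth x₀ (Submodule.subset_span (Set.mem_insert _ _))
  have huw : ∀ i, (inner ℝ (u i) w : ℝ) = 0 := fun i =>
    hworth (u i) (Submodule.subset_span (Set.mem_insert_of_mem _ ⟨i, rfl⟩))
  -- push x₀ to the unit sphere
  set t : ℝ := Real.sqrt (1 - ‖x₀‖ ^ 2) with htdef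
  set y : E := x₀ + t • w with hydef
  have ht2 : t ^ 2 = 1 - ‖x₀‖ ^ 2 := Real.sq_sqrt (by nlinarith [norm_nonneg x₀])
  have hynorm : ‖y‖ = 1 := by
    have hsq : ‖y‖ ^ 2 = 1 := by
      rw [hydef, norm_add_sq_real, real_inner_smul_right, hx₀w, norm_smul, hwnorm]
      simp only [mul_one, mul_zero]
      rw [Real.norm_eq_abs, sq_abs, ht2]; ring
    calc ‖y‖ = Real.sqrt (‖y‖ ^ 2) := (Real.sqrt_sq (norm_nonneg y)).symm
    _ = 1 := by rw [hsq, Real.sqrt_one]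
  have hyi : ∀ i, c i < (inner ℝ y (u i) : ℝ) := by
    intro i
    have : (inner ℝ y (u i) : ℝ) = inner ℝ x₀ (u i) := by
      rw [hydef, inner_add_left, real_inner_smul_left, real_inner_comm (u i) w, huw i,
        mul_zero, add_zero]
    rw [this]; exact hx₀i i
  -- the intersection of the open half-spaces (without the norm constraint) is norm-open
  have hSopen : IsOpen (⋂ i, {x : E | c i < (inner ℝ x (u i) : ℝ)}) := by
    apply isOpen_iInter_of_finite
    intro i
    exact isOpen_lt continuous_const (continuous_id.inner continuous_const)
  have hyS : y ∈ ⋂ i, {x : E | c i < (inner ℝ x (u i) : ℝ)} := by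
    simp only [Set.mem_iInter, Set.mem_setOf_eq]; exact hyi
  obtain ⟨r, hr, hball⟩ := Metric.isOpen_iff.mp hSopen y hyS
  refine ⟨y, 1 - r ^ 2 / 2, ⟨y, ?_, ?_⟩, ?_⟩
  · exact le_of_eq hynorm
  · have h1 : (inner ℝ y y : ℝ) = 1 := by
      rw [real_inner_self_eq_norm_sq, hynorm]; norm_num
    rw [h1]; nlinarith
  · intro x hx
    obtain ⟨hxle, hxinner⟩ := hx
    have hdist : ‖x - y‖ < r := by
      have h1 : ‖x - y‖ ^ 2 = ‖x‖ ^ 2 - 2 * (inner ℝ x y : ℝ) + ‖y‖ ^ 2 :=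
        norm_sub_sq_real x y
      nlinarith [norm_nonneg (x - y), norm_nonneg x]
    have hxS : x ∈ ⋂ i, {x : E | c i < (inner ℝ x (u i) : ℝ)} :=
      hball (by rwa [Metric.mem_ball, dist_eq_norm])
    simp only [Set.mem_iInter, Set.mem_setOf_eq] at hxS ⊢
    exact fun i => ⟨hxle, hxS i⟩
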